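/- Let C₀ be a real symmetric positive semidefinite n×n matrix, S a real symmetric positive semidefinite m×m matrix, D a real n×m matrix, and set C₁ = C₀ + D S Dᵀ. Let F : ℝⁿ → ℝ be bounded and measurable and suppose F is invariant along the range of D, i.e. F(x + D v) = F(x) for all x ∈ ℝⁿ and v ∈ ℝᵐ. Then ∫_{ℝⁿ} F dN(0, C₀) = ∫_{ℝⁿ} F dN(0, C₁), where N(0, C) denotes the centered Gaussian measure on ℝⁿ with covariance matrix C. -/

import Mathlib

/-!
Statement 6: invariance of Gaussian averages of gauge-invariant observables
under a positive semidefinite "pure gauge" shift of the covariance: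
if `C₁ = C₀ + D S Dᵀ` and `F(x + Dv) = F(x)`, then
`∫ F dN(0, C₀) = ∫ F dN(0, C₁)`.
-/

open Matrix MeasureTheory ProbabilityTheory

open scoped Classical

noncomputable section

namespace SommerfieldStmt6

/-- The centered Gaussian measure `N(0, C)` on `ℝⁿ` with positive semidefinite
covariance matrix `C`, realized as the pushforward of the standard Gaussian
under multiplication by the positive semidefinite square root of `C` (junk
value `0` if `C` is not positive semidefinite). -/
def gaussianMeasure {n : ℕ} (C : Matrix (Fin n) (Fin n) ℝ) :
    Measure (Fin n → ℝ) :=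
  if h : C.PosSemidef then
    Measure.map (fun x => ((h.1.eigenvectorUnitary : Matrix (Fin n) (Fin n) ℝ) *
      diagonal ((↑) ∘ Real.sqrt ∘ h.1.eigenvalues) *
      (star h.1.eigenvectorUnitary : Matrix (Fin n) (Fin n) ℝ)) *ᵥ x) (Measure.pi fun _ => gaussianReal 0 1)
  else 0

/-- The positive semidefinite square root used in `gaussianMeasure`. -/
abbrev _root_.Matrix.PosSemidef.sqrt {k : ℕ} {M : Matrix (Fin k) (Fin k) ℝ} (h : M.PosSemidef) :
    Matrix (Fin k) (Fin k) ℝ :=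
  (h.1.eigenvectorUnitary : Matrix (Fin k) (Fin k) ℝ) *
    diagonal ((↑) ∘ Real.sqrt ∘ h.1.eigenvalues) *
    (star h.1.eigenvectorUnitary : Matrix (Fin k) (Fin k) ℝ)

theorem _root_.Matrix.PosSemidef.sqrt_mul_self {k : ℕ} {M : Matrix (Fin k) (Fin k) ℝ}
    (h : M.PosSemidef) : h.sqrt * h.sqrt = M := by
  have hU : (star h.1.eigenvectorUnitary : Matrix (Fin k) (Fin k) ℝ) *
      (h.1.eigenvectorUnitary : Matrix (Fin k) (Fin k) ℝ) = 1 :=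
    Unitary.star_mul_self_of_mem (SetLike.coe_mem _)
  have hd : diagonal ((↑) ∘ Real.sqrt ∘ h.1.eigenvalues) *
      diagonal ((↑) ∘ Real.sqrt ∘ h.1.eigenvalues) =
      diagonal (RCLike.ofReal ∘ h.1.eigenvalues : Fin k → ℝ) := by
    rw [diagonal_mul_diagonal]
    congr 1
    funext i
    simp [Real.mul_self_sqrt (h.eigenvalues_nonneg i)]
  conv_rhs => rw [h.1.spectral_theorem, Unitary.conjStarAlgAut_apply]
  simp only [Matrix.PosSemidef.sqrt]
  rw [← hd]
  simp only [Matrix.mul_assoc]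
  rw [← Matrix.mul_assoc (star _ : Matrix (Fin k) (Fin k) ℝ) (h.1.eigenvectorUnitary : Matrix (Fin k) (Fin k) ℝ), hU,
    Matrix.one_mul]

theorem _root_.Matrix.PosSemidef.sqrt_transpose {k : ℕ} {M : Matrix (Fin k) (Fin k) ℝ}
    (h : M.PosSemidef) : h.sqrtᵀ = h.sqrt := by
  simp only [Matrix.PosSemidef.sqrt, Matrix.transpose_mul, Matrix.diagonal_transpose,
    Matrix.mul_assoc]
  rw [show (star h.1.eigenvectorUnitary : Matrix (Fin k) (Fin k) ℝ)ᵀ =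
      (h.1.eigenvectorUnitary : Matrix (Fin k) (Fin k) ℝ) by
    rw [Matrix.star_eq_conjTranspose, Matrix.conjTranspose_eq_transpose_of_trivial,
      Matrix.transpose_transpose]]
  rw [show (h.1.eigenvectorUnitary : Matrix (Fin k) (Fin k) ℝ)ᵀ =
      (star h.1.eigenvectorUnitary : Matrix (Fin k) (Fin k) ℝ) by
    rw [Matrix.star_eq_conjTranspose, Matrix.conjTranspose_eq_transpose_of_trivial]]

/-! ### Auxiliary lemmas -/

open scoped ENNReal RealInnerProductSpace

section Lintegral

/-- Fubini for `lintegral` of a product function over `Fin n` indexed pi measures. -/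
theorem lintegral_fin_prod {n : ℕ} {E : Fin n → Type*}
    [∀ i, MeasureSpace (E i)] [∀ i, SigmaFinite (volume : Measure (E i))]
    (f : (i : Fin n) → E i → ℝ≥0∞) (hf : ∀ i, Measurable (f i)) :
    ∫⁻ x : (i : Fin n) → E i, ∏ i, f i (x i) = ∏ i, ∫⁻ x, f i x := by
  induction n with
  | zero =>
      simp only [volume_pi, Finset.univ_eq_empty, Finset.prod_empty, lintegral_const,
        Measure.pi_empty_univ, mul_one]
  | succ n n_ih =>
      have hmeas : Measurable fun (x : (i : Fin (n + 1)) → E i) => ∏ i, f i (x i) :=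
        Finset.measurable_prod _ fun i _ => (hf i).comp (measurable_pi_apply i)
      calc
        ∫⁻ x : (i : Fin (n + 1)) → E i, ∏ i, f i (x i)
            = ∫⁻ p : E 0 × ((i : Fin n) → E (Fin.succ i)),
              f 0 p.1 * ∏ i : Fin n, f (Fin.succ i) (p.2 i) := by
          rw [volume_pi, ← ((measurePreserving_piFinSuccAbove
            (fun i => (volume : Measure (E i))) 0).symm).lintegral_comp hmeas]
          apply lintegral_congr
          intro p
          rw [MeasurableEquiv.piFinSuccAbove_symm_apply, Fin.prod_univ_succ]
          simp only [Fin.insertNthEquiv, Equiv.coe_fn_mk, Fin.insertNth_apply_same]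
          rfl
        _ = (∫⁻ x, f 0 x) * ∏ i : Fin n, ∫⁻ x : E (Fin.succ i), f (Fin.succ i) x := by
          rw [Measure.volume_eq_prod,
            lintegral_prod_mul (f := f 0) (g := fun x : (i : Fin n) → E (Fin.succ i) => ∏ i : Fin n, f (Fin.succ i) (x i))
              (hf 0).aemeasurable
              (Finset.measurable_prod _ fun i _ =>
                (hf (Fin.succ i)).comp (measurable_pi_apply i)).aemeasurable,
            n_ih (fun i => f (Fin.succ i)) (fun i => hf _)]
        _ = ∏ i, ∫⁻ x, f i x := by rw [Fin.prod_univ_succ]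

/-- Fubini for `lintegral` of a product function over general finite index types. -/
theorem lintegral_fintype_prod {ι : Type*} [Fintype ι] {E : Type*} [MeasureSpace E]
    [SigmaFinite (volume : Measure E)] (f : ι → E → ℝ≥0∞) (hf : ∀ i, Measurable (f i)) :
    ∫⁻ x : ι → E, ∏ i, f i (x i) = ∏ i, ∫⁻ x, f i x := by
  let e := (Fintype.equivFin ι).symm
  have hmeas : Measurable fun (x : ι → E) => ∏ i, f i (x i) :=
    Finset.measurable_prod _ fun i _ => (hf i).comp (measurable_pi_apply i)
  rw [volume_pi, ← (measurePreserving_piCongrLeft (fun _ : ι => (volume : Measure E))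
    e).lintegral_comp hmeas]
  have : ∀ y : Fin (Fintype.card ι) → E,
      (∏ i, f i ((MeasurableEquiv.piCongrLeft (fun _ : ι => E) e) y i)) =
      ∏ j, f (e j) (y j) := by
    intro y
    rw [← e.prod_comp]
    refine Finset.prod_congr rfl fun j _ => ?_
    rw [MeasurableEquiv.coe_piCongrLeft, Equiv.piCongrLeft_apply_apply]
  simp_rw [this]
  rw [show (Measure.pi fun _ : Fin (Fintype.card ι) => (volume : Measure E)) = volume by
    rw [volume_pi],
    lintegral_fin_prod (fun j => f (e j)) (fun j => hf (e j)), ← e.prod_comp]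

end Lintegral

section StdGaussian

variable {ι : Type*} [Fintype ι]

/-- The standard Gaussian measure on `ι → ℝ` as a density against Lebesgue measure. -/
theorem pi_gaussianReal_eq_withDensity :
    (Measure.pi fun _ : ι => gaussianReal 0 1) =
      (volume : Measure (ι → ℝ)).withDensity fun x => ∏ i, gaussianPDF 0 1 (x i) := by
  refine Measure.pi_eq fun s hs => ?_
  have hind : ∀ x : ι → ℝ,
      (Set.univ.pi s).indicator (fun x => ∏ i, gaussianPDF 0 1 (x i)) x =
        ∏ i, (s i).indicator (gaussianPDF 0 1) (x i) := by
    intro x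
    by_cases hx : x ∈ Set.univ.pi s
    · rw [Set.indicator_of_mem hx]
      refine Finset.prod_congr rfl fun i _ => ?_
      rw [Set.indicator_of_mem (hx i (Set.mem_univ i))]
    · rw [Set.indicator_of_notMem hx]
      have hx' : ∃ i, x i ∉ s i := by simpa [Set.mem_pi] using hx
      obtain ⟨i, hi⟩ := hx'
      exact (Finset.prod_eq_zero (Finset.mem_univ i)
        (by rw [Set.indicator_of_notMem hi])).symm
  calc (volume : Measure (ι → ℝ)).withDensity (fun x => ∏ i, gaussianPDF 0 1 (x i))
        (Set.univ.pi s)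
      = ∫⁻ a in Set.univ.pi s, ∏ i, gaussianPDF 0 1 (a i) :=
        withDensity_apply _ (MeasurableSet.univ_pi hs)
    _ = ∫⁻ a, (Set.univ.pi s).indicator (fun x => ∏ i, gaussianPDF 0 1 (x i)) a :=
        (lintegral_indicator (MeasurableSet.univ_pi hs) _).symm
    _ = ∫⁻ a : ι → ℝ, ∏ i, (s i).indicator (gaussianPDF 0 1) (a i) := lintegral_congr hind
    _ = ∏ i, ∫⁻ x : ℝ, (s i).indicator (gaussianPDF 0 1) x :=
        lintegral_fintype_prod _ fun i => (measurable_gaussianPDF 0 1).indicator (hs i)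
    _ = ∏ i, (gaussianReal 0 1) (s i) := by
        refine Finset.prod_congr rfl fun i _ => ?_
        rw [lintegral_indicator (hs i) _, gaussianReal_apply 0 one_ne_zero (s i)]

theorem map_withDensity_comp {α β : Type*} [MeasurableSpace α] [MeasurableSpace β]
    (μ : Measure α) {f : α → β} (hf : Measurable f) {g : β → ℝ≥0∞} (hg : Measurable g) :
    Measure.map f (μ.withDensity fun a => g (f a)) = (Measure.map f μ).withDensity g := by
  ext A hA
  rw [Measure.map_apply hf hA, withDensity_apply _ hA, withDensity_apply _ (hf hA),
    setLIntegral_map hA hg hf]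

theorem dot_mulVec_mulVec {n ι : Type*} [Fintype n] [Fintype ι]
    (M : Matrix n ι ℝ) (x y : n → ℝ) :
    (Mᵀ *ᵥ x) ⬝ᵥ (Mᵀ *ᵥ y) = ((M * Mᵀ) *ᵥ x) ⬝ᵥ y := by
  rw [Matrix.dotProduct_mulVec, ← Matrix.mulVec_transpose Mᵀ, Matrix.transpose_transpose,
    Matrix.mulVec_mulVec]

theorem measurable_mulVec {n ι : Type*} [Fintype ι] (M : Matrix n ι ℝ) :
    Measurable fun v : ι → ℝ => M *ᵥ v := by
  refine measurable_pi_lambda _ fun i => ?_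
  simp_rw [Matrix.mulVec, dotProduct]
  exact Finset.measurable_sum _ fun j _ =>
    (measurable_pi_apply j).const_mul _

/-- Rotation invariance of the standard Gaussian measure. -/
theorem map_orthogonal_pi_gaussianReal [DecidableEq ι] (O : Matrix ι ι ℝ)
    (hO : Oᵀ * O = 1) :
    Measure.map (fun x => O *ᵥ x) (Measure.pi fun _ : ι => gaussianReal 0 1) =
      Measure.pi fun _ : ι => gaussianReal 0 1 := by
  have hdet : O.det ≠ 0 := by
    intro h
    have h1 : Oᵀ.det * O.det = 1 := by rw [← Matrix.det_mul, hO, Matrix.det_one]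
    rw [h, mul_zero] at h1
    exact zero_ne_one h1
  have hOnorm : ∀ x : ι → ℝ, (O *ᵥ x) ⬝ᵥ (O *ᵥ x) = x ⬝ᵥ x := by
    intro x
    have := dot_mulVec_mulVec Oᵀ x x
    rwa [Matrix.transpose_transpose, hO, Matrix.one_mulVec] at this
  have hg : ∀ x : ι → ℝ, (∏ i, gaussianPDF 0 1 ((O *ᵥ x) i)) = ∏ i, gaussianPDF 0 1 (x i) := by
    intro x
    have haux : ∀ y : ι → ℝ, (∏ i, gaussianPDF 0 1 (y i)) =
        ENNReal.ofReal ((Real.sqrt (2 * Real.pi))⁻¹ ^ Fintype.card ι *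
          Real.exp (∑ i, -(y i ^ 2) / 2)) := by
      intro y
      simp_rw [gaussianPDF]
      rw [← ENNReal.ofReal_prod_of_nonneg fun i _ => gaussianPDFReal_nonneg 0 1 (y i)]
      congr 1
      rw [Real.exp_sum, ← Finset.card_univ, ← Finset.prod_const, ← Finset.prod_mul_distrib]
      refine Finset.prod_congr rfl fun i _ => ?_
      rw [gaussianPDFReal]
      norm_num
    rw [haux, haux]
    congr 2
    have h1 : ∀ y : ι → ℝ, (∑ i, -(y i ^ 2) / 2) = -(y ⬝ᵥ y) / 2 := by
      intro y
      rw [dotProduct, ← Finset.sum_neg_distrib, Finset.sum_div]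
      exact Finset.sum_congr rfl fun i _ => by ring
    rw [h1, h1, hOnorm]
  have hgmeas : Measurable fun x : ι → ℝ => ∏ i, gaussianPDF 0 1 (x i) :=
    Finset.measurable_prod _ fun i _ =>
      (measurable_gaussianPDF 0 1).comp (measurable_pi_apply i)
  rw [pi_gaussianReal_eq_withDensity]
  have hcomp : (fun x : ι → ℝ => ∏ i, gaussianPDF 0 1 (x i)) =
      fun x : ι → ℝ => ∏ i, gaussianPDF 0 1 ((O *ᵥ x) i) := by
    funext x; exact (hg x).symm
  conv_lhs => rw [hcomp]
  rw [map_withDensity_comp _ (measurable_mulVec O) hgmeas]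
  have hmapvol : Measure.map (fun x : ι → ℝ => O *ᵥ x) volume = volume := by
    have := Real.map_matrix_volume_pi_eq_smul_volume_pi hdet
    have habs : ENNReal.ofReal |O.det⁻¹| = 1 := by
      have h1 : Oᵀ.det * O.det = 1 := by rw [← Matrix.det_mul, hO, Matrix.det_one]
      rw [Matrix.det_transpose] at h1
      have : |O.det| = 1 := by
        have := abs_eq_abs.mpr (Or.inl h1.symm)
        nlinarith [abs_nonneg O.det, sq_abs O.det, abs_mul O.det O.det]
      rw [abs_inv, this]
      norm_num
    have hfun : (fun x : ι → ℝ => O *ᵥ x) = Matrix.toLin' O := by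
      funext x; rw [Matrix.toLin'_apply]
    rw [hfun, this, habs, one_smul]
  rw [hmapvol]

end StdGaussian

section Orthogonal

/-- If `A Aᵀ = B Bᵀ` then `A = B O` for some orthogonal `O`. -/
theorem exists_orthogonal_factor {n ι : Type*} [Fintype n] [Fintype ι] [DecidableEq ι]
    (A B : Matrix n ι ℝ) (h : A * Aᵀ = B * Bᵀ) :
    ∃ O : Matrix ι ι ℝ, Oᵀ * O = 1 ∧ A = B * O := by
  classical
  let V := EuclideanSpace ℝ ι
  let W := EuclideanSpace ℝ n
  let fA : W →ₗ[ℝ] V := Matrix.toEuclideanLin Aᵀ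
  let fB : W →ₗ[ℝ] V := Matrix.toEuclideanLin Bᵀ
  have happ : ∀ (M : Matrix n ι ℝ) (x : W),
      ((Matrix.toEuclideanLin Mᵀ x : V) : ι → ℝ) = Mᵀ *ᵥ (x : n → ℝ) := by
    intro M x
    rfl
  have hinner_eq : ∀ (M : Matrix n ι ℝ) (x y : W),
      inner ℝ (Matrix.toEuclideanLin Mᵀ x) (Matrix.toEuclideanLin Mᵀ y) =
        ((M * Mᵀ) *ᵥ (x : n → ℝ)) ⬝ᵥ (y : n → ℝ) := by
    intro M x y
    rw [← dot_mulVec_mulVec]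
    rw [PiLp.inner_apply]
    simp only [RCLike.inner_apply, starRingEnd_apply, star_trivial]
    rw [dotProduct]; exact Finset.sum_congr rfl fun i _ => mul_comm _ _
  have hinner : ∀ x y : W, inner ℝ (fA x) (fA y) = inner ℝ (fB x) (fB y) := by
    intro x y
    rw [hinner_eq, hinner_eq, h]
  have hker : LinearMap.ker fB = LinearMap.ker fA := by
    ext x
    simp only [LinearMap.mem_ker]
    rw [← inner_self_eq_zero (𝕜 := ℝ) (x := fB x), ← inner_self_eq_zero (𝕜 := ℝ) (x := fA x),
      hinner]
  let e₀ := fB.quotKerEquivRange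
  let e₁ := Submodule.quotEquivOfEq _ _ hker
  let L₀ : LinearMap.range fB →ₗ[ℝ] V :=
    (LinearMap.range fA).subtype ∘ₗ (fA.quotKerEquivRange.toLinearMap ∘ₗ
      (e₁.toLinearMap ∘ₗ e₀.symm.toLinearMap))
  have hL₀ : ∀ x : W, L₀ ⟨fB x, LinearMap.mem_range_self _ x⟩ = fA x := by
    intro x
    have h0 : e₀.symm ⟨fB x, LinearMap.mem_range_self _ x⟩ = Submodule.Quotient.mk x := by
      have h0' : e₀ (Submodule.Quotient.mk x) = ⟨fB x, LinearMap.mem_range_self _ x⟩ :=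
        Subtype.ext (fB.quotKerEquivRange_apply_mk x)
      rw [← h0', LinearEquiv.symm_apply_apply]
    simp only [L₀, LinearMap.comp_apply, LinearEquiv.coe_coe, h0, e₁,
      Submodule.quotEquivOfEq_mk, LinearMap.quotKerEquivRange_apply_mk,
      Submodule.coe_subtype]
  let L : LinearMap.range fB →ₗᵢ[ℝ] V :=
    { toLinearMap := L₀
      norm_map' := by
        rintro ⟨s, x, rfl⟩
        have h1 : (⟨fB x, LinearMap.mem_range_self _ x⟩ : LinearMap.range fB) =
            ⟨fB x, ⟨x, rfl⟩⟩ := rfl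
        rw [← h1, hL₀]
        have h2 : ‖(⟨fB x, LinearMap.mem_range_self _ x⟩ : LinearMap.range fB)‖ = ‖fB x‖ := rfl
        rw [h2, norm_eq_sqrt_real_inner (fA x),
          norm_eq_sqrt_real_inner (fB x), hinner] }
  let U := L.extend
  have hU : ∀ x : W, U (fB x) = fA x := by
    intro x
    have h1 := L.extend_apply ⟨fB x, LinearMap.mem_range_self _ x⟩
    have h2 : ((⟨fB x, LinearMap.mem_range_self _ x⟩ : LinearMap.range fB) : V) = fB x := rfl
    rw [h2] at h1
    rw [h1]
    exact hL₀ x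
  let O' : Matrix ι ι ℝ := Matrix.toEuclideanLin.symm U.toLinearMap
  have hO'U : ∀ v : V, Matrix.toEuclideanLin O' v = U v := by
    intro v
    rw [show Matrix.toEuclideanLin O' = U.toLinearMap from
      Matrix.toEuclideanLin.apply_symm_apply U.toLinearMap]
    rfl
  have hO'v : ∀ v : ι → ℝ, O' *ᵥ v = ((U ((WithLp.toLp 2 v : V)) : V) : ι → ℝ) := by
    intro v
    have := hO'U (WithLp.toLp 2 v : V)
    calc O' *ᵥ v = ((Matrix.toEuclideanLin O' (WithLp.toLp 2 v : V) : V) : ι → ℝ) := rfl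
      _ = ((U ((WithLp.toLp 2 v : V)) : V) : ι → ℝ) := by rw [this]
  -- `O' * Bᵀ = Aᵀ`
  have hO'B : O' * Bᵀ = Aᵀ := by
    apply Matrix.toLin'.injective
    apply LinearMap.ext
    intro x
    rw [Matrix.toLin'_apply, Matrix.toLin'_apply, ← Matrix.mulVec_mulVec, hO'v]
    have h1 : ((fB (WithLp.toLp 2 x) : V) : ι → ℝ) = Bᵀ *ᵥ x := happ B (WithLp.toLp 2 x)
    have h2 : ((fA (WithLp.toLp 2 x) : V) : ι → ℝ) = Aᵀ *ᵥ x := happ A (WithLp.toLp 2 x)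
    rw [← h1, ← h2]
    exact congrArg WithLp.ofLp (hU (WithLp.toLp 2 x))
  -- orthogonality of `O'`
  have hdot : ∀ v w : ι → ℝ, (O' *ᵥ v) ⬝ᵥ (O' *ᵥ w) = v ⬝ᵥ w := by
    intro v w
    have h1 : (O' *ᵥ v) ⬝ᵥ (O' *ᵥ w) = inner ℝ (U (WithLp.toLp 2 v : V)) (U (WithLp.toLp 2 w : V)) := by
      rw [hO'v, hO'v, PiLp.inner_apply]
      simp only [RCLike.inner_apply, starRingEnd_apply, star_trivial]
      rw [dotProduct]; exact Finset.sum_congr rfl fun i _ => mul_comm _ _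
    rw [h1, U.inner_map_map, PiLp.inner_apply]
    simp only [RCLike.inner_apply, starRingEnd_apply, star_trivial]
    rw [dotProduct]; exact Finset.sum_congr rfl fun i _ => mul_comm _ _
  have hO'orth : O'ᵀ * O' = 1 := by
    have h2 : ∀ v w : ι → ℝ, ((O'ᵀ * O') *ᵥ v) ⬝ᵥ w = v ⬝ᵥ w := by
      intro v w
      have h3 := dot_mulVec_mulVec O'ᵀ v w
      rw [Matrix.transpose_transpose] at h3
      rw [← h3, hdot]
    ext i j
    have h4 := h2 (Pi.single j 1) (Pi.single i 1)
    simpa [Matrix.mulVec_single, dotProduct_single, Pi.single_apply,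
      Matrix.one_apply] using h4
  refine ⟨O'ᵀ, ?_, ?_⟩
  · rw [Matrix.transpose_transpose]
    exact mul_eq_one_comm.mp hO'orth
  · have := congrArg Matrix.transpose hO'B
    rw [Matrix.transpose_mul, Matrix.transpose_transpose, Matrix.transpose_transpose] at this
    exact this.symm

/-- If `A Aᵀ = B Bᵀ`, the pushforwards of the standard Gaussian under `A` and `B` agree. -/
theorem map_mulVec_pi_gaussianReal_eq {n ι : Type*} [Fintype n] [Fintype ι] [DecidableEq ι]
    (A B : Matrix n ι ℝ) (h : A * Aᵀ = B * Bᵀ) :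
    Measure.map (fun x => A *ᵥ x) (Measure.pi fun _ : ι => gaussianReal 0 1) =
      Measure.map (fun x => B *ᵥ x) (Measure.pi fun _ : ι => gaussianReal 0 1) := by
  obtain ⟨O, hO, rfl⟩ := exists_orthogonal_factor A B h
  have hcomp : (fun x : ι → ℝ => (B * O) *ᵥ x) = (fun x => B *ᵥ x) ∘ fun x => O *ᵥ x := by
    funext x
    simp [Function.comp, Matrix.mulVec_mulVec]
  rw [hcomp, ← Measure.map_map (measurable_mulVec B) (measurable_mulVec O),
    map_orthogonal_pi_gaussianReal O hO]

end Orthogonal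

theorem gaussian_invariance_pure_gauge_shift
    {n m : ℕ} (C₀ : Matrix (Fin n) (Fin n) ℝ) (hC₀ : C₀.PosSemidef)
    (S : Matrix (Fin m) (Fin m) ℝ) (hS : S.PosSemidef)
    (D : Matrix (Fin n) (Fin m) ℝ)
    (F : (Fin n → ℝ) → ℝ) (hFmeas : Measurable F)
    (hFbdd : ∃ B : ℝ, ∀ x, |F x| ≤ B)
    (hFinv : ∀ (x : Fin n → ℝ) (v : Fin m → ℝ), F (x + D *ᵥ v) = F x) :
    ∫ x, F x ∂(gaussianMeasure C₀) =
      ∫ x, F x ∂(gaussianMeasure (C₀ + D * S * Dᵀ)) := by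
  obtain ⟨Bd, hBd⟩ := hFbdd
  -- positive semidefiniteness of the new covariance
  have hDSD : (D * S * Dᵀ).PosSemidef := by
    have := hS.mul_mul_conjTranspose_same D
    rwa [Matrix.conjTranspose_eq_transpose_of_trivial] at this
  have hC₁ : (C₀ + D * S * Dᵀ).PosSemidef := hC₀.add hDSD
  -- transposes of square roots
  have hsqrtT : ∀ {k : ℕ} (M : Matrix (Fin k) (Fin k) ℝ) (hM : M.PosSemidef),
      hM.sqrtᵀ = hM.sqrt := by
    intro k M hM
    exact hM.sqrt_transpose
  -- the two rectangular matrices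
  set T : Matrix (Fin n) (Fin m) ℝ := D * hS.sqrt with hT
  set A : Matrix (Fin n) (Fin n ⊕ Fin m) ℝ := Matrix.fromCols hC₀.sqrt T with hA
  set B : Matrix (Fin n) (Fin n ⊕ Fin m) ℝ := Matrix.fromCols hC₁.sqrt 0 with hB
  have hAAT : A * Aᵀ = C₀ + D * S * Dᵀ := by
    rw [hA, Matrix.transpose_fromCols, Matrix.fromCols_mul_fromRows,
      hsqrtT C₀ hC₀, hC₀.sqrt_mul_self, hT, Matrix.transpose_mul, hsqrtT S hS,
      Matrix.mul_assoc D, ← Matrix.mul_assoc hS.sqrt, hS.sqrt_mul_self, Matrix.mul_assoc D,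
      ← Matrix.mul_assoc]
  have hBBT : B * Bᵀ = C₀ + D * S * Dᵀ := by
    rw [hB, Matrix.transpose_fromCols, Matrix.fromCols_mul_fromRows,
      hsqrtT _ hC₁, hC₁.sqrt_mul_self, Matrix.transpose_zero, Matrix.mul_zero, add_zero]
  have hABmap := map_mulVec_pi_gaussianReal_eq A B (hAAT.trans hBBT.symm)
  -- measures
  set γn : Measure (Fin n → ℝ) := Measure.pi fun _ => gaussianReal 0 1 with hγn
  set γm : Measure (Fin m → ℝ) := Measure.pi fun _ => gaussianReal 0 1 with hγm
  set γ : Measure (Fin n ⊕ Fin m → ℝ) := Measure.pi fun _ => gaussianReal 0 1 with hγ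
  have hprob_n : IsProbabilityMeasure γn := by rw [hγn]; infer_instance
  have hprob_m : IsProbabilityMeasure γm := by rw [hγm]; infer_instance
  have hprob : IsProbabilityMeasure γ := by rw [hγ]; infer_instance
  -- the measure preserving equivalence between the product and the sum-indexed pi measure
  have hmp : MeasurePreserving
      (MeasurableEquiv.sumPiEquivProdPi fun _ : Fin n ⊕ Fin m => ℝ).symm
      (γn.prod γm) γ :=
    measurePreserving_sumPiEquivProdPi_symm fun _ : Fin n ⊕ Fin m => gaussianReal 0 1
  have hesymm : ∀ p : (Fin n → ℝ) × (Fin m → ℝ),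
      (MeasurableEquiv.sumPiEquivProdPi fun _ : Fin n ⊕ Fin m => ℝ).symm p =
        Sum.elim p.1 p.2 := by
    intro p
    funext i
    cases i <;> rfl
  -- generic computation of the integral of `F` against `map (M *ᵥ ·) γ`
  have hmain : ∀ M : Matrix (Fin n) (Fin n ⊕ Fin m) ℝ,
      ∫ x, F x ∂(Measure.map (fun w => M *ᵥ w) γ) =
        ∫ u, ∫ v, F (M *ᵥ Sum.elim u v) ∂γm ∂γn := by
    intro M
    rw [integral_map (measurable_mulVec M).aemeasurable hFmeas.aestronglyMeasurable]
    rw [← hmp.integral_comp']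
    have : ∀ p : (Fin n → ℝ) × (Fin m → ℝ),
        F (M *ᵥ (MeasurableEquiv.sumPiEquivProdPi fun _ : Fin n ⊕ Fin m => ℝ).symm p) =
          F (M *ᵥ Sum.elim p.1 p.2) := by
      intro p; rw [hesymm]
    simp_rw [this]
    rw [integral_prod]
    have hmeas2 : Measurable fun p : (Fin n → ℝ) × (Fin m → ℝ) =>
        F (M *ᵥ Sum.elim p.1 p.2) := by
      refine hFmeas.comp ((measurable_mulVec M).comp ?_)
      refine measurable_pi_lambda _ fun i => ?_
      cases i with
      | inl i => exact (measurable_pi_apply i).comp measurable_fst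
      | inr i => exact (measurable_pi_apply i).comp measurable_snd
    refine Integrable.mono' (integrable_const Bd) hmeas2.aestronglyMeasurable ?_
    exact ae_of_all _ fun p => hBd _
  -- compute both sides
  have hC₀side : ∫ x, F x ∂(gaussianMeasure C₀) = ∫ u, F (hC₀.sqrt *ᵥ u) ∂γn := by
    rw [gaussianMeasure, dif_pos hC₀, ← hγn,
      integral_map (measurable_mulVec hC₀.sqrt).aemeasurable hFmeas.aestronglyMeasurable]
  have hC₁side : ∫ x, F x ∂(gaussianMeasure (C₀ + D * S * Dᵀ)) =
      ∫ u, F (hC₁.sqrt *ᵥ u) ∂γn := by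
    rw [gaussianMeasure, dif_pos hC₁, ← hγn,
      integral_map (measurable_mulVec hC₁.sqrt).aemeasurable hFmeas.aestronglyMeasurable]
  have hAint : ∫ x, F x ∂(Measure.map (fun w => A *ᵥ w) γ) = ∫ u, F (hC₀.sqrt *ᵥ u) ∂γn := by
    rw [hmain A]
    have : ∀ u v, F (A *ᵥ Sum.elim u v) = F (hC₀.sqrt *ᵥ u) := by
      intro u v
      rw [hA, Matrix.fromCols_mulVec_sumElim, hT, ← Matrix.mulVec_mulVec (M := D), hFinv]
    simp_rw [this]
    simp [integral_const]
  have hBint : ∫ x, F x ∂(Measure.map (fun w => B *ᵥ w) γ) = ∫ u, F (hC₁.sqrt *ᵥ u) ∂γn := by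
    rw [hmain B]
    have : ∀ u v, F (B *ᵥ Sum.elim u v) = F (hC₁.sqrt *ᵥ u) := by
      intro u v
      rw [hB, Matrix.fromCols_mulVec_sumElim, Matrix.zero_mulVec, add_zero]
    simp_rw [this]
    simp [integral_const]
  rw [hC₀side, hC₁side, ← hAint, ← hBint, hABmap]

end SommerfieldStmt6
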